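/- Let a, b, c : ℝ → ℝ be positive differentiable functions satisfying the Heisenberg-group Ricci flow ODE system a' = -a²/(2bc), b' = a/(2c), c' = a/(2b). Then the products a·b and a·c are constant functions, and the ratio b/c is a constant function. -/

import Mathlib

/-- Heisenberg Ricci flow: a·b, a·c and b/c are conserved. -/
theorem heisenberg_conserved (a b c : ℝ → ℝ)
    (hapos : ∀ t, 0 < a t) (hbpos : ∀ t, 0 < b t) (hcpos : ∀ t, 0 < c t)
    (ha : Differentiable ℝ a) (hb : Differentiable ℝ b) (hc : Differentiable ℝ c)
    (hda : ∀ t, deriv a t = -(a t) ^ 2 / (2 * b t * c t))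
    (hdb : ∀ t, deriv b t = a t / (2 * c t))
    (hdc : ∀ t, deriv c t = a t / (2 * b t)) :
    (∀ s t, a s * b s = a t * b t) ∧
    (∀ s t, a s * c s = a t * c t) ∧
    (∀ s t, b s / c s = b t / c t) := by
  refine ⟨fun s t => ?_, fun s t => ?_, fun s t => ?_⟩
  · have h : ∀ x, deriv (fun x => a x * b x) x = 0 := by
      intro x
      rw [deriv_fun_mul (ha x) (hb x), hda, hdb]
      have hb' := (hbpos x).ne'
      have hc' := (hcpos x).ne'
      field_simp
      ring
    exact is_const_of_deriv_eq_zero (ha.mul hb) h s t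
  · have h : ∀ x, deriv (fun x => a x * c x) x = 0 := by
      intro x
      rw [deriv_fun_mul (ha x) (hc x), hda, hdc]
      have hb' := (hbpos x).ne'
      have hc' := (hcpos x).ne'
      field_simp
      ring
    exact is_const_of_deriv_eq_zero (ha.mul hc) h s t
  · have h : ∀ x, deriv (fun x => b x / c x) x = 0 := by
      intro x
      rw [deriv_fun_div (hb x) (hc x) (hcpos x).ne', hdb, hdc]
      have hb' := (hbpos x).ne'
      have hc' := (hcpos x).ne'
      field_simp
      ring
    exact is_const_of_deriv_eq_zero (hb.div hc fun x => (hcpos x).ne') h s t
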